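/- (Uniform-in-model linear representation for least squares) Let (X₁, Y₁), …, (X_n, Y_n) be points of ℝ^p × ℝ (e.g., a realized sample), define Σ̂_n := (1/n) Σᵢ XᵢXᵢᵀ, Γ̂_n := (1/n) Σᵢ XᵢYᵢ, and let Σ_n ∈ ℝ^{p×p} symmetric and Γ_n ∈ ℝ^p be given (in the stochastic setting, Σ_n = (1/n) Σᵢ E[XᵢXᵢᵀ] and Γ_n = (1/n) Σᵢ E[XᵢYᵢ]). Suppose Λ_n(k) := Λ(k; Σ_n) > 0 and RIP_n(k) := RIP(k, Σ̂_n − Σ_n) < Λ_n(k). Then sup_{M∈𝓜(k)} ‖β̂_{n,M} − β_{n,M} − (1/n) Σ_{i=1}^n [Σ_n(M)]^{-1} Xᵢ(M)(Yᵢ − Xᵢ(M)ᵀ β_{n,M})‖₂ ≤ (RIP_n(k)/Λ_n(k)) · (𝒟_n(k) + RIP_n(k) · S_{2,k}(Σ_n, Γ_n)) / (Λ_n(k) − RIP_n(k)), where 𝒟_n(k) := 𝒟(k, Γ̂_n − Γ_n), β̂_{n,M} := (Σ̂_n(M))^{-1} Γ̂_n(M), and β_{n,M} := (Σ_n(M))^{-1}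 Γ_n(M). -/

import Mathlib

open scoped BigOperators
open MeasureTheory ProbabilityTheory Real Matrix

set_option synthInstance.maxHeartbeats 1000000
set_option maxHeartbeats 1000000
set_option linter.unusedSectionVars false
noncomputable section

/-- The Euclidean (`ℓ₂`) norm of a finitely indexed real vector. -/
def norm2 {ι : Type*} [Fintype ι] (v : ι → ℝ) : ℝ := Real.sqrt (∑ i, (v i) ^ 2)

/-- The `ℓ₁` norm of a finitely indexed real vector. -/
def norm1 {ι : Type*} [Fintype ι] (v : ι → ℝ) : ℝ := ∑ i, |v i|

/-- The `ℓ₂ → ℓ₂` operator norm of a square real matrix. -/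
def opNorm {ι : Type*} [Fintype ι] (A : Matrix ι ι ℝ) : ℝ :=
  sSup {r | ∃ x : ι → ℝ, norm2 x ≤ 1 ∧ r = norm2 (A.mulVec x)}

/-- The collection of models: nonempty subsets of `{1, …, p}` of cardinality at most `k`. -/
def Models (p k : ℕ) : Set (Finset (Fin p)) := {M | 1 ≤ M.card ∧ M.card ≤ k}

/-- The subvector of `v` with indices in the model `M`. -/
def subv {p : ℕ} (v : Fin p → ℝ) (M : Finset (Fin p)) : {x // x ∈ M} → ℝ := fun i => v i.1

/-- The submatrix of `A` with row and column indices in the model `M`. -/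
def subm {p : ℕ} (A : Matrix (Fin p) (Fin p) ℝ) (M : Finset (Fin p)) :
    Matrix {x // x ∈ M} {x // x ∈ M} ℝ := fun i j => A i.1 j.1

/-- `RIP(k, A)`: the maximal `k`-sparse operator norm `sup_{M ∈ 𝓜(k)} ‖A(M)‖_op`. -/
def RIP {p : ℕ} (k : ℕ) (A : Matrix (Fin p) (Fin p) ℝ) : ℝ :=
  ⨆ M : Models p k, opNorm (subm A M.1)

/-- `𝒟(k, v) = sup_{M ∈ 𝓜(k)} ‖v(M)‖₂`. -/
def Dnorm {p : ℕ} (k : ℕ) (v : Fin p → ℝ) : ℝ :=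
  ⨆ M : Models p k, norm2 (subv v M.1)

/-- `θ` has at most `k` nonzero coordinates. -/
def sparse {p : ℕ} (k : ℕ) (θ : Fin p → ℝ) : Prop := Set.ncard {j | θ j ≠ 0} ≤ k

/-- The minimal `k`-sparse eigenvalue
`Λ(k; A) = inf{θᵀAθ/‖θ‖₂² : θ ≠ 0, θ k-sparse}`. -/
def Lam {p : ℕ} (k : ℕ) (A : Matrix (Fin p) (Fin p) ℝ) : ℝ :=
  sInf {r | ∃ θ : Fin p → ℝ, θ ≠ 0 ∧ sparse k θ ∧ r = θ ⬝ᵥ A.mulVec θ / norm2 θ ^ 2}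

/-- The linear regression map `β_M(Σ, Γ) = (Σ(M))⁻¹ Γ(M)`. -/
def betaM {p : ℕ} (M : Finset (Fin p)) (S : Matrix (Fin p) (Fin p) ℝ) (G : Fin p → ℝ) :
    {x // x ∈ M} → ℝ := (subm S M)⁻¹.mulVec (subv G M)

/-- `S_{2,k}(Σ, Γ) = sup_{M ∈ 𝓜(k)} ‖β_M(Σ, Γ)‖₂`. -/
def S2k {p : ℕ} (k : ℕ) (S : Matrix (Fin p) (Fin p) ℝ) (G : Fin p → ℝ) : ℝ :=
  ⨆ M : Models p k, norm2 (betaM M.1 S G)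

/-- `S_{1,k}(Σ, Γ) = sup_{M ∈ 𝓜(k)} ‖β_M(Σ, Γ)‖₁`. -/
def S1k {p : ℕ} (k : ℕ) (S : Matrix (Fin p) (Fin p) ℝ) (G : Fin p → ℝ) : ℝ :=
  ⨆ M : Models p k, norm1 (betaM M.1 S G)

/-- The `k`-sparse Euclidean unit ball `Θ_k ⊆ ℝ^p`. -/
def Theta (p k : ℕ) : Set (Fin p → ℝ) := {θ | sparse k θ ∧ norm2 θ ≤ 1}

/-- The elementwise maximum norm `|||A|||_∞` of a matrix. -/
def normInfMat {p : ℕ} (A : Matrix (Fin p) (Fin p) ℝ) : ℝ :=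
  ⨆ q : Fin p × Fin p, |A q.1 q.2|

/-- The supremum norm `‖v‖_∞` of a vector. -/
def normInfVec {p : ℕ} (v : Fin p → ℝ) : ℝ := ⨆ j, |v j|

section Helpers
variable {ι : Type*} [Fintype ι]

lemma norm2_eq (v : ι → ℝ) : norm2 v = ‖(WithLp.toLp 2 (v) : EuclideanSpace ℝ ι)‖ := by
  rw [EuclideanSpace.norm_eq]; simp [norm2, sq_abs]

lemma norm2_nonneg (v : ι → ℝ) : 0 ≤ norm2 v := Real.sqrt_nonneg _

lemma norm2_zero : norm2 (0 : ι → ℝ) = 0 := by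
  rw [norm2_eq]; exact norm_zero

lemma norm2_pos {v : ι → ℝ} (hv : v ≠ 0) : 0 < norm2 v := by
  rw [norm2_eq]; exact norm_pos_iff.2 (fun h => hv (congrArg WithLp.ofLp h))

lemma norm2_add_le (a b : ι → ℝ) : norm2 (a + b) ≤ norm2 a + norm2 b := by
  rw [norm2_eq, norm2_eq, norm2_eq]
  exact norm_add_le (WithLp.toLp 2 (a) : EuclideanSpace ℝ ι) (WithLp.toLp 2 (b) : EuclideanSpace ℝ ι)

lemma norm2_smul (c : ℝ) (v : ι → ℝ) : norm2 (c • v) = |c| * norm2 v := by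
  rw [norm2_eq, norm2_eq]
  have : (WithLp.toLp 2 (c • v) : EuclideanSpace ℝ ι) = c • (WithLp.toLp 2 (v) : EuclideanSpace ℝ ι) := rfl
  rw [this, norm_smul, Real.norm_eq_abs]

lemma abs_dot_le (x y : ι → ℝ) : |dotProduct x y| ≤ norm2 x * norm2 y := by
  rw [norm2_eq, norm2_eq]
  have := abs_real_inner_le_norm (WithLp.toLp 2 (x) : EuclideanSpace ℝ ι) (WithLp.toLp 2 (y) : EuclideanSpace ℝ ι)
  convert this using 2
  simp [dotProduct, PiLp.inner_apply, mul_comm]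

lemma mulVec_norm2_le (A : Matrix ι ι ℝ) [DecidableEq ι] (x : ι → ℝ) :
    norm2 (A.mulVec x) ≤ ‖(Matrix.toEuclideanLin A).toContinuousLinearMap‖ * norm2 x := by
  rw [norm2_eq, norm2_eq]
  have := (Matrix.toEuclideanLin A).toContinuousLinearMap.le_opNorm
    (WithLp.toLp 2 (x) : EuclideanSpace ℝ ι)
  simpa [Matrix.toEuclideanLin_apply] using this

lemma opNorm_nonneg (A : Matrix ι ι ℝ) [DecidableEq ι] : 0 ≤ opNorm A := by
  have h0 : (0:ℝ) ∈ {r | ∃ x : ι → ℝ, norm2 x ≤ 1 ∧ r = norm2 (A.mulVec x)} :=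
    ⟨0, by rw [norm2_zero]; norm_num, by rw [Matrix.mulVec_zero, norm2_zero]⟩
  refine le_csSup ⟨‖(Matrix.toEuclideanLin A).toContinuousLinearMap‖, ?_⟩ h0
  rintro r ⟨x, hx, rfl⟩
  calc norm2 (A.mulVec x) ≤ _ * norm2 x := mulVec_norm2_le A x
    _ ≤ _ * 1 := by
        exact mul_le_mul_of_nonneg_left hx (norm_nonneg _)
    _ = _ := mul_one _

lemma mulVec_le_opNorm (A : Matrix ι ι ℝ) [DecidableEq ι] (x : ι → ℝ) :
    norm2 (A.mulVec x) ≤ opNorm A * norm2 x := by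
  rcases eq_or_ne x 0 with rfl | hx
  · simp [Matrix.mulVec_zero, norm2_zero]
  · have hpos := norm2_pos hx
    set u := (norm2 x)⁻¹ • x with hu
    have hnu : norm2 u = 1 := by
      rw [norm2_smul, abs_of_nonneg (inv_nonneg.2 hpos.le), inv_mul_cancel₀ hpos.ne']
    have hmem : norm2 (A.mulVec u) ∈ {r | ∃ x : ι → ℝ, norm2 x ≤ 1 ∧ r = norm2 (A.mulVec x)} :=
      ⟨u, hnu.le, rfl⟩
    have hle : norm2 (A.mulVec u) ≤ opNorm A := by
      refine le_csSup ⟨‖(Matrix.toEuclideanLin A).toContinuousLinearMap‖, ?_⟩ hmem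
      rintro r ⟨y, hy, rfl⟩
      calc norm2 (A.mulVec y) ≤ _ * norm2 y := mulVec_norm2_le A y
        _ ≤ _ * 1 := mul_le_mul_of_nonneg_left hy (norm_nonneg _)
        _ = _ := mul_one _
    have : A.mulVec u = (norm2 x)⁻¹ • A.mulVec x := by
      rw [hu, Matrix.mulVec_smul]
    rw [this, norm2_smul, abs_of_nonneg (inv_nonneg.2 hpos.le)] at hle
    calc norm2 (A.mulVec x) = norm2 x * ((norm2 x)⁻¹ * norm2 (A.mulVec x)) := by
          field_simp
      _ ≤ norm2 x * opNorm A := mul_le_mul_of_nonneg_left hle hpos.le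
      _ = opNorm A * norm2 x := mul_comm _ _


variable {ι : Type*} [Fintype ι] [DecidableEq ι]

lemma norm2_eq_zero_iff {v : ι → ℝ} : norm2 v = 0 ↔ v = 0 := by
  constructor
  · intro h; by_contra hv; exact (norm2_pos hv).ne' h
  · rintro rfl; exact norm2_zero

lemma coercive_lower {B : Matrix ι ι ℝ} {c : ℝ}
    (h : ∀ θ : ι → ℝ, c * norm2 θ ^ 2 ≤ dotProduct θ (B.mulVec θ)) (θ : ι → ℝ) :
    c * norm2 θ ≤ norm2 (B.mulVec θ) := by
  rcases eq_or_ne θ 0 with rfl | hθ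
  · simp [Matrix.mulVec_zero, norm2_zero]
  · have hpos := norm2_pos hθ
    have h1 : c * norm2 θ ^ 2 ≤ norm2 θ * norm2 (B.mulVec θ) :=
      (h θ).trans ((le_abs_self _).trans (abs_dot_le _ _))
    nlinarith [norm2_nonneg (B.mulVec θ)]

lemma coercive_isUnit {B : Matrix ι ι ℝ} {c : ℝ} (hc : 0 < c)
    (h : ∀ θ : ι → ℝ, c * norm2 θ ^ 2 ≤ dotProduct θ (B.mulVec θ)) : IsUnit B := by
  rw [← Matrix.mulVec_injective_iff_isUnit]
  intro x y hxy
  have h0 : B.mulVec (x - y) = 0 := by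
    rw [Matrix.mulVec_sub, hxy, sub_self]
  have := coercive_lower h (x - y)
  rw [h0, norm2_zero] at this
  have : norm2 (x - y) ≤ 0 := by nlinarith
  have : norm2 (x - y) = 0 := le_antisymm this (norm2_nonneg _)
  exact sub_eq_zero.1 (norm2_eq_zero_iff.1 this)

lemma coercive_inv_bound {B : Matrix ι ι ℝ} {c : ℝ} (hc : 0 < c)
    (h : ∀ θ : ι → ℝ, c * norm2 θ ^ 2 ≤ dotProduct θ (B.mulVec θ)) (v : ι → ℝ) :
    norm2 (B⁻¹.mulVec v) ≤ c⁻¹ * norm2 v := by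
  have hU := coercive_isUnit hc h
  have hBB : B.mulVec (B⁻¹.mulVec v) = v := by
    rw [Matrix.mulVec_mulVec, Matrix.mul_nonsing_inv B ((Matrix.isUnit_iff_isUnit_det B).1 hU),
      Matrix.one_mulVec]
  have := coercive_lower h (B⁻¹.mulVec v)
  rw [hBB] at this
  rw [le_inv_mul_iff₀ hc]
  linarith [this]

lemma coercive_mulVec_inv (B : Matrix ι ι ℝ) (hU : IsUnit B) (v : ι → ℝ) :
    B.mulVec (B⁻¹.mulVec v) = v := by
  rw [Matrix.mulVec_mulVec, Matrix.mul_nonsing_inv B ((Matrix.isUnit_iff_isUnit_det B).1 hU),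
    Matrix.one_mulVec]

section ModelLemmas
variable {p k : ℕ}

/-- extension of a model-vector by zero -/
def extv {p : ℕ} (M : Finset (Fin p)) (θ : {x // x ∈ M} → ℝ) : Fin p → ℝ :=
  fun j => if h : j ∈ M then θ ⟨j, h⟩ else 0

lemma sum_extv_support {M : Finset (Fin p)} (f : Fin p → ℝ) (hf : ∀ j ∉ M, f j = 0) :
    ∑ j, f j = ∑ i : {x // x ∈ M}, f i.1 := by
  rw [Finset.sum_coe_sort M f]
  exact (Finset.sum_subset M.subset_univ (fun j _ hj => hf j hj)).symm

lemma extv_zero {M : Finset (Fin p)} (θ : {x // x ∈ M} → ℝ) {j : Fin p} (hj : j ∉ M) :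
    extv M θ j = 0 := dif_neg hj

lemma extv_mem {M : Finset (Fin p)} (θ : {x // x ∈ M} → ℝ) {j : Fin p} (hj : j ∈ M) :
    extv M θ j = θ ⟨j, hj⟩ := dif_pos hj

lemma extv_norm2 {M : Finset (Fin p)} (θ : {x // x ∈ M} → ℝ) :
    norm2 (extv M θ) = norm2 θ := by
  unfold norm2
  congr 1
  rw [sum_extv_support (fun j => extv M θ j ^ 2) (fun j hj => by simp [extv_zero θ hj])]
  exact Finset.sum_congr rfl fun i _ => by rw [extv_mem θ i.2]

lemma extv_sparse {M : Finset (Fin p)} (hM : M.card ≤ k) (θ : {x // x ∈ M} → ℝ) :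
    sparse k (extv M θ) := by
  unfold sparse
  have hsub : {j | extv M θ j ≠ 0} ⊆ ↑M := by
    intro j hj
    by_contra hjM
    exact hj (extv_zero θ hjM)
  calc Set.ncard {j | extv M θ j ≠ 0} ≤ Set.ncard (↑M : Set (Fin p)) :=
        Set.ncard_le_ncard hsub M.finite_toSet
    _ = M.card := Set.ncard_coe_finset M
    _ ≤ k := hM

lemma extv_mulVec {M : Finset (Fin p)} (S : Matrix (Fin p) (Fin p) ℝ) (θ : {x // x ∈ M} → ℝ)
    (a : Fin p) : S.mulVec (extv M θ) a = ∑ j : {x // x ∈ M}, S a j.1 * θ j := by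
  show dotProduct (fun j => S a j) (extv M θ) = _
  unfold dotProduct
  rw [sum_extv_support (fun j => S a j * extv M θ j)
    (fun j hj => by simp [extv_zero θ hj])]
  exact Finset.sum_congr rfl fun j _ => by rw [extv_mem θ j.2]

lemma extv_dot {M : Finset (Fin p)} (S : Matrix (Fin p) (Fin p) ℝ) (θ : {x // x ∈ M} → ℝ) :
    dotProduct (extv M θ) (S.mulVec (extv M θ))
      = dotProduct θ ((subm S M).mulVec θ) := by
  unfold dotProduct
  rw [sum_extv_support (fun j => extv M θ j * S.mulVec (extv M θ) j)
    (fun j hj => by simp [extv_zero θ hj])]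
  refine Finset.sum_congr rfl fun i _ => ?_
  rw [extv_mem θ i.2, extv_mulVec S θ i.1]
  rfl

lemma lam_coercive {p k : ℕ} (Sn : Matrix (Fin p) (Fin p) ℝ) {M : Finset (Fin p)}
    (hM : M ∈ Models p k) (θ : {x // x ∈ M} → ℝ) :
    Lam k Sn * norm2 θ ^ 2 ≤ dotProduct θ ((subm Sn M).mulVec θ) := by
  rcases eq_or_ne θ 0 with rfl | hθ
  · simp [norm2_zero]
  · set C := ‖(Matrix.toEuclideanLin Sn).toContinuousLinearMap‖ with hC
    have hbdd : BddBelow {r | ∃ θ : Fin p → ℝ, θ ≠ 0 ∧ sparse k θ ∧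
        r = dotProduct θ (Sn.mulVec θ) / norm2 θ ^ 2} := by
      refine ⟨-C, ?_⟩
      rintro r ⟨ψ, hψ, -, rfl⟩
      have hpos : 0 < norm2 ψ ^ 2 := pow_pos (norm2_pos hψ) 2
      rw [le_div_iff₀ hpos]
      have h1 : |dotProduct ψ (Sn.mulVec ψ)| ≤ C * norm2 ψ ^ 2 := by
        calc |dotProduct ψ (Sn.mulVec ψ)|
            ≤ norm2 ψ * norm2 (Sn.mulVec ψ) := abs_dot_le _ _
          _ ≤ norm2 ψ * (C * norm2 ψ) :=
              mul_le_mul_of_nonneg_left (mulVec_norm2_le Sn ψ) (norm2_nonneg ψ)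
          _ = C * norm2 ψ ^ 2 := by ring
      nlinarith [neg_abs_le (dotProduct ψ (Sn.mulVec ψ))]
    have hθ' : extv M θ ≠ 0 := by
      intro h
      apply hθ
      have h2 := extv_norm2 θ
      rw [h, norm2_zero] at h2
      exact norm2_eq_zero_iff.1 h2.symm
    have hmem : dotProduct (extv M θ) (Sn.mulVec (extv M θ)) / norm2 (extv M θ) ^ 2
        ∈ {r | ∃ θ : Fin p → ℝ, θ ≠ 0 ∧ sparse k θ ∧
            r = dotProduct θ (Sn.mulVec θ) / norm2 θ ^ 2} :=
      ⟨extv M θ, hθ', extv_sparse hM.2 θ, rfl⟩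
    have hle : Lam k Sn ≤ dotProduct (extv M θ) (Sn.mulVec (extv M θ))
        / norm2 (extv M θ) ^ 2 := csInf_le hbdd hmem
    have hpos : 0 < norm2 (extv M θ) ^ 2 := pow_pos (norm2_pos hθ') 2
    rw [le_div_iff₀ hpos] at hle
    rw [extv_norm2, extv_dot] at hle
    exact hle

lemma models_nonempty {p k : ℕ} (hk : 1 ≤ k) (Sn : Matrix (Fin p) (Fin p) ℝ)
    (hLam : 0 < Lam k Sn) : Nonempty (Models p k) := by
  rcases Nat.eq_zero_or_pos p with rfl | hp
  · exfalso
    have hempty : {r | ∃ θ : Fin 0 → ℝ, θ ≠ 0 ∧ sparse k θ ∧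
        r = dotProduct θ (Sn.mulVec θ) / norm2 θ ^ 2} = ∅ := by
      rw [Set.eq_empty_iff_forall_notMem]
      rintro r ⟨θ, hθ, -, -⟩
      exact hθ (Subsingleton.elim θ 0)
    have : Lam k Sn = 0 := by unfold Lam; rw [hempty, Real.sInf_empty]
    linarith
  · exact ⟨⟨{⟨0, hp⟩}, by simp [Models], by simpa [Models] using hk⟩⟩

lemma le_RIP {p k : ℕ} (A : Matrix (Fin p) (Fin p) ℝ) {M : Finset (Fin p)}
    (hM : M ∈ Models p k) : opNorm (subm A M) ≤ RIP k A := by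
  exact le_ciSup (f := fun M : Models p k => opNorm (subm A M.1))
    (Set.Finite.bddAbove (Set.finite_range _)) (⟨M, hM⟩ : Models p k)

lemma le_Dnorm {p k : ℕ} (v : Fin p → ℝ) {M : Finset (Fin p)}
    (hM : M ∈ Models p k) : norm2 (subv v M) ≤ Dnorm k v := by
  exact le_ciSup (f := fun M : Models p k => norm2 (subv v M.1))
    (Set.Finite.bddAbove (Set.finite_range _)) (⟨M, hM⟩ : Models p k)

lemma le_S2k {p k : ℕ} (S : Matrix (Fin p) (Fin p) ℝ) (G : Fin p → ℝ) {M : Finset (Fin p)}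
    (hM : M ∈ Models p k) : norm2 (betaM M S G) ≤ S2k k S G := by
  exact le_ciSup (f := fun M : Models p k => norm2 (betaM M.1 S G))
    (Set.Finite.bddAbove (Set.finite_range _)) (⟨M, hM⟩ : Models p k)

lemma norm2_sub_le {ι : Type*} [Fintype ι] (a b : ι → ℝ) :
    norm2 (a - b) ≤ norm2 a + norm2 b := by
  rw [norm2_eq, norm2_eq, norm2_eq]
  exact norm_sub_le (WithLp.toLp 2 (a) : EuclideanSpace ℝ ι) (WithLp.toLp 2 (b) : EuclideanSpace ℝ ι)

lemma norm2_neg {ι : Type*} [Fintype ι] (a : ι → ℝ) : norm2 (-a) = norm2 a := by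
  rw [norm2_eq, norm2_eq]
  exact norm_neg (WithLp.toLp 2 (a) : EuclideanSpace ℝ ι)

lemma inv_mulVec_mulVec {ι : Type*} [Fintype ι] [DecidableEq ι] (B : Matrix ι ι ℝ)
    (hU : IsUnit B) (x : ι → ℝ) : B⁻¹.mulVec (B.mulVec x) = x := by
  rw [Matrix.mulVec_mulVec, Matrix.nonsing_inv_mul B ((Matrix.isUnit_iff_isUnit_det B).1 hU),
    Matrix.one_mulVec]

lemma sum_identity {n p : ℕ} (hn : 0 < n) (X : Fin n → Fin p → ℝ) (Y : Fin n → ℝ)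
    (M : Finset (Fin p)) (β : {x // x ∈ M} → ℝ) :
    (n:ℝ)⁻¹ • ∑ i, (Y i - dotProduct (subv (X i) M) β) • subv (X i) M
      = subv (fun j => (n : ℝ)⁻¹ * ∑ i, X i j * Y i) M
        - (subm (Matrix.of fun j l => (n : ℝ)⁻¹ * ∑ i, X i j * X i l) M).mulVec β := by
  funext j
  simp only [Pi.smul_apply, Finset.sum_apply, Pi.sub_apply, smul_eq_mul, subv, subm,
    Matrix.of_apply, Matrix.mulVec, dotProduct]
  have h2 : ∑ l : {x // x ∈ M}, ((n:ℝ)⁻¹ * ∑ i, X i j.1 * X i l.1) * β l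
      = (n:ℝ)⁻¹ * ∑ i, (∑ l : {x // x ∈ M}, X i l.1 * β l) * X i j.1 := by
    calc ∑ l : {x // x ∈ M}, ((n:ℝ)⁻¹ * ∑ i, X i j.1 * X i l.1) * β l
        = ∑ l : {x // x ∈ M}, ∑ i, (n:ℝ)⁻¹ * (X i j.1 * X i l.1 * β l) := by
          refine Finset.sum_congr rfl fun l _ => ?_
          rw [Finset.mul_sum, Finset.sum_mul]
          exact Finset.sum_congr rfl fun i _ => by ring
      _ = ∑ i, ∑ l : {x // x ∈ M}, (n:ℝ)⁻¹ * (X i j.1 * X i l.1 * β l) := Finset.sum_comm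
      _ = ∑ i, (n:ℝ)⁻¹ * ((∑ l : {x // x ∈ M}, X i l.1 * β l) * X i j.1) := by
          refine Finset.sum_congr rfl fun i _ => ?_
          rw [Finset.sum_mul, Finset.mul_sum]
          exact Finset.sum_congr rfl fun l _ => by ring
      _ = (n:ℝ)⁻¹ * ∑ i, (∑ l : {x // x ∈ M}, X i l.1 * β l) * X i j.1 := by
          rw [Finset.mul_sum]
  rw [h2, ← mul_sub, ← Finset.sum_sub_distrib]
  congr 1
  refine Finset.sum_congr rfl fun i _ => ?_
  ring


/-- Uniform-in-model linear representation for least squares: with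
`Σ̂_n = (1/n)∑ᵢ XᵢXᵢᵀ`, `Γ̂_n = (1/n)∑ᵢ XᵢYᵢ`, `β̂_{n,M} = (Σ̂_n(M))⁻¹Γ̂_n(M)`,
`β_{n,M} = (Σ_n(M))⁻¹Γ_n(M)`, if `Λ_n(k) > 0` and `RIP_n(k) < Λ_n(k)` then
`sup_{M∈𝓜(k)} ‖β̂_{n,M} − β_{n,M} − (1/n)∑ᵢ (Σ_n(M))⁻¹Xᵢ(M)(Yᵢ − Xᵢ(M)ᵀβ_{n,M})‖₂
  ≤ (RIP_n(k)/Λ_n(k)) (𝒟_n(k) + RIP_n(k) S_{2,k}(Σ_n,Γ_n)) / (Λ_n(k) − RIP_n(k))`. -/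
theorem stmt13 {n p : ℕ} (hn : 0 < n) (k : ℕ) (hk : 1 ≤ k)
    (X : Fin n → Fin p → ℝ) (Y : Fin n → ℝ)
    (hatS : Matrix (Fin p) (Fin p) ℝ)
    (hhatS : hatS = Matrix.of fun j l => (n : ℝ)⁻¹ * ∑ i, X i j * X i l)
    (hatG : Fin p → ℝ)
    (hhatG : hatG = fun j => (n : ℝ)⁻¹ * ∑ i, X i j * Y i)
    (Sn : Matrix (Fin p) (Fin p) ℝ) (hSn : Sn.IsSymm) (Gn : Fin p → ℝ)
    (hLam : 0 < Lam k Sn)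
    (hRIP : RIP k (hatS - Sn) < Lam k Sn) :
    (⨆ M : Models p k,
        norm2 (betaM M.1 hatS hatG - betaM M.1 Sn Gn
          - (n : ℝ)⁻¹ • ∑ i, (subm Sn M.1)⁻¹.mulVec
              ((Y i - subv (X i) M.1 ⬝ᵥ betaM M.1 Sn Gn) • subv (X i) M.1))) ≤
      (RIP k (hatS - Sn) / Lam k Sn) *
        ((Dnorm k (hatG - Gn) + RIP k (hatS - Sn) * S2k k Sn Gn) /
          (Lam k Sn - RIP k (hatS - Sn))) := by
  haveI hne : Nonempty (Models p k) := models_nonempty hk Sn hLam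
  set Λ := Lam k Sn with hΛdef
  set R := RIP k (hatS - Sn) with hRdef
  set D := Dnorm k (hatG - Gn) with hDdef
  set S := S2k k Sn Gn with hSdef
  refine ciSup_le fun M => ?_
  -- abbreviations
  set A := subm Sn M.1 with hAdef
  set Ah := subm hatS M.1 with hAhdef
  set Δ := subm (hatS - Sn) M.1 with hΔdef
  set G := subv Gn M.1 with hGdef
  set Gh := subv hatG M.1 with hGhdef
  set β := betaM M.1 Sn Gn with hβdef
  set βh := betaM M.1 hatS hatG with hβhdef
  have hΔAh : Δ = Ah - A := rfl
  have hβ : β = A⁻¹.mulVec G := rfl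
  have hβhG : βh = Ah⁻¹.mulVec Gh := rfl
  -- coercivity facts
  have hA : ∀ θ : {x // x ∈ M.1} → ℝ, Λ * norm2 θ ^ 2 ≤ dotProduct θ (A.mulVec θ) :=
    lam_coercive Sn M.2
  have hopΔ : opNorm Δ ≤ R := le_RIP _ M.2
  have hR0 : 0 ≤ R := (opNorm_nonneg Δ).trans hopΔ
  have hΔbound : ∀ x : {x // x ∈ M.1} → ℝ, norm2 (Δ.mulVec x) ≤ R * norm2 x := fun x =>
    (mulVec_le_opNorm Δ x).trans (mul_le_mul_of_nonneg_right hopΔ (norm2_nonneg x))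
  have hAh : ∀ θ : {x // x ∈ M.1} → ℝ,
      (Λ - R) * norm2 θ ^ 2 ≤ dotProduct θ (Ah.mulVec θ) := by
    intro θ
    have e1 : Ah = A + Δ := by rw [hΔAh]; abel
    have e2 : dotProduct θ (Ah.mulVec θ)
        = dotProduct θ (A.mulVec θ) + dotProduct θ (Δ.mulVec θ) := by
      rw [e1, Matrix.add_mulVec, dotProduct_add]
    have e3 : |dotProduct θ (Δ.mulVec θ)| ≤ R * norm2 θ ^ 2 := by
      calc |dotProduct θ (Δ.mulVec θ)| ≤ norm2 θ * norm2 (Δ.mulVec θ) := abs_dot_le _ _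
        _ ≤ norm2 θ * (R * norm2 θ) :=
            mul_le_mul_of_nonneg_left (hΔbound θ) (norm2_nonneg θ)
        _ = R * norm2 θ ^ 2 := by ring
    have := hA θ
    rw [e2]
    nlinarith [neg_abs_le (dotProduct θ (Δ.mulVec θ))]
  have hΛR : 0 < Λ - R := by linarith
  have hUA : IsUnit A := coercive_isUnit hLam hA
  have hUAh : IsUnit Ah := coercive_isUnit hΛR hAh
  have hAinv : ∀ v, norm2 (A⁻¹.mulVec v) ≤ Λ⁻¹ * norm2 v := coercive_inv_bound hLam hA
  have hAhinv : ∀ v, norm2 (Ah⁻¹.mulVec v) ≤ (Λ - R)⁻¹ * norm2 v := coercive_inv_bound hΛR hAh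
  have hAβ : A.mulVec β = G := by rw [hβ]; exact coercive_mulVec_inv A hUA G
  have hAhβh : Ah.mulVec βh = Gh := by rw [hβhG]; exact coercive_mulVec_inv Ah hUAh Gh
  -- the sum identity
  have hsum : (n:ℝ)⁻¹ • ∑ i, A⁻¹.mulVec
        ((Y i - dotProduct (subv (X i) M.1) β) • subv (X i) M.1)
      = A⁻¹.mulVec (Gh - Ah.mulVec β) := by
    have h1 : ∑ i, A⁻¹.mulVec ((Y i - dotProduct (subv (X i) M.1) β) • subv (X i) M.1)
        = A⁻¹.mulVec (∑ i, (Y i - dotProduct (subv (X i) M.1) β) • subv (X i) M.1) := by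
      simp only [← Matrix.mulVecLin_apply]
      rw [← map_sum]
    rw [h1, ← Matrix.mulVec_smul, hGhdef, hAhdef, hhatG, hhatS,
      sum_identity hn X Y M.1 β]
  -- main algebraic identity
  have hE : βh - β - A⁻¹.mulVec (Gh - Ah.mulVec β) = A⁻¹.mulVec (Δ.mulVec (β - βh)) := by
    have h3 : Δ.mulVec (β - βh) = (Ah.mulVec β - Gh) - (G - A.mulVec βh) := by
      rw [hΔAh, Matrix.sub_mulVec, Matrix.mulVec_sub, Matrix.mulVec_sub, hAhβh, hAβ]
    rw [h3]
    simp only [Matrix.mulVec_sub]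
    rw [inv_mulVec_mulVec A hUA βh, ← hβ]
    abel
  -- bound on βh - β
  have hβdiff : βh - β = Ah⁻¹.mulVec ((Gh - G) - Δ.mulVec β) := by
    have h4 : Ah.mulVec (βh - β) = (Gh - G) - Δ.mulVec β := by
      rw [Matrix.mulVec_sub, hAhβh, hΔAh, Matrix.sub_mulVec, hAβ]
      abel
    rw [← h4, inv_mulVec_mulVec Ah hUAh]
  have hb1 : norm2 (βh - β) ≤ (Λ - R)⁻¹ * (D + R * S) := by
    rw [hβdiff]
    refine (hAhinv _).trans ?_
    refine mul_le_mul_of_nonneg_left ?_ (inv_nonneg.2 hΛR.le)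
    refine (norm2_sub_le _ _).trans (add_le_add ?_ ?_)
    · have hGhG : Gh - G = subv (hatG - Gn) M.1 := rfl
      rw [hGhG, hDdef]
      exact le_Dnorm _ M.2
    · exact (hΔbound β).trans (mul_le_mul_of_nonneg_left (le_S2k Sn Gn M.2) hR0)
  -- conclusion
  calc norm2 (βh - β - (n:ℝ)⁻¹ • ∑ i, A⁻¹.mulVec
        ((Y i - dotProduct (subv (X i) M.1) β) • subv (X i) M.1))
      = norm2 (A⁻¹.mulVec (Δ.mulVec (β - βh))) := by rw [hsum, hE]
    _ ≤ Λ⁻¹ * norm2 (Δ.mulVec (β - βh)) := hAinv _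
    _ ≤ Λ⁻¹ * (R * norm2 (β - βh)) :=
        mul_le_mul_of_nonneg_left (hΔbound _) (inv_nonneg.2 hLam.le)
    _ = Λ⁻¹ * (R * norm2 (βh - β)) := by
        rw [show β - βh = -(βh - β) by abel, norm2_neg]
    _ ≤ Λ⁻¹ * (R * ((Λ - R)⁻¹ * (D + R * S))) :=
        mul_le_mul_of_nonneg_left (mul_le_mul_of_nonneg_left hb1 hR0) (inv_nonneg.2 hLam.le)
    _ = R / Λ * ((D + R * S) / (Λ - R)) := by
        rw [div_eq_mul_inv, div_eq_mul_inv]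
        ring
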